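/- Let κ > 0, α, β, δ₋₁, δ₀, δ₁ ∈ ℝ and μ ∈ ℂ. Set δ(z) := 2/z + δ₋₁ + δ₀·z + δ₁·z² and σ(z) := -√κ·(1 + z²). Then the identity δ(z)·(-i/z + iα) + μ·(σ(z)·δ'(z) - σ'(z)·δ(z)) + (1/2)·σ(z)²·(i/z²) - i·β·σ(z) = 0 holds for all z ∈ ℍ if and only if all of the following hold: μ = i(4-κ)/(4√κ); δ₋₁ = 2α; β√κ + κ - 6i√κ·μ + α·δ₋₁ - δ₀ + i√κ·μ·δ₀ = 0; α·δ₀ - δ₁ - 2i√κ·μ·(δ₋₁ - δ₁) = 0; β√κ + κ/2 - i√κ·μ·δ₀ + α·δ₁ = 0. -/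
import Mathlib

open Complex

private lemma expr_eq_poly_div (s α β δm1 δ0 δ1 μ z : ℂ) (hz : z ≠ 0) :
    (2/z + δm1 + δ0*z + δ1*z^2) * (-I/z + I*α)
      + μ * ((-s*(1+z^2))*(-2/z^2 + δ0 + 2*δ1*z) - (-2*s*z)*(2/z + δm1 + δ0*z + δ1*z^2))
      + (1/2)*(-s*(1+z^2))^2*(I/z^2) - I*β*(-s*(1+z^2))
    = ((-2*I + 2*μ*s + I*s^2/2) + (I*(2*α - δm1))*z
        + (I*(β*s + s^2 + α*δm1 - δ0) + μ*s*(6-δ0))*z^2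
        + (I*(α*δ0-δ1) + 2*μ*s*(δm1-δ1))*z^3
        + (I*(β*s + s^2/2 + α*δ1) + μ*s*δ0)*z^4) / z^2 := by
  have hz2 : z^2 ≠ 0 := pow_ne_zero 2 hz
  rw [eq_div_iff hz2]
  field_simp
  ring

private lemma poly_zero (s α β δm1 δ0 δ1 μ z : ℂ) (hz : z ≠ 0)
    (H : (2/z + δm1 + δ0*z + δ1*z^2) * (-I/z + I*α)
      + μ * ((-s*(1+z^2))*(-2/z^2 + δ0 + 2*δ1*z) - (-2*s*z)*(2/z + δm1 + δ0*z + δ1*z^2))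
      + (1/2)*(-s*(1+z^2))^2*(I/z^2) - I*β*(-s*(1+z^2)) = 0) :
    (-2*I + 2*μ*s + I*s^2/2) + (I*(2*α - δm1))*z
        + (I*(β*s + s^2 + α*δm1 - δ0) + μ*s*(6-δ0))*z^2
        + (I*(α*δ0-δ1) + 2*μ*s*(δm1-δ1))*z^3
        + (I*(β*s + s^2/2 + α*δ1) + μ*s*δ0)*z^4 = 0 := by
  rw [expr_eq_poly_div s α β δm1 δ0 δ1 μ z hz, div_eq_zero_iff] at H
  exact H.resolve_right (pow_ne_zero 2 hz)

/-- Classification equation for (δ,σ)-SLE coupled to GFF with Dirichlet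
covariance, radial-type driving field `σ(z) = -√κ(1+z²)`. -/
theorem coupling_classification_radial (κ : ℝ) (hκ : 0 < κ)
    (α β δm1 δ0 δ1 : ℝ) (μ : ℂ)
    (δ σ dδ dσ : ℂ → ℂ)
    (hδ : ∀ z, δ z = 2 / z + (δm1 : ℂ) + (δ0 : ℂ) * z + (δ1 : ℂ) * z ^ 2)
    (hdδ : ∀ z, dδ z = -2 / z ^ 2 + (δ0 : ℂ) + 2 * (δ1 : ℂ) * z)
    (hσ : ∀ z, σ z = -(Real.sqrt κ : ℂ) * (1 + z ^ 2))
    (hdσ : ∀ z, dσ z = -2 * (Real.sqrt κ : ℂ) * z) :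
    (∀ z : ℂ, 0 < z.im →
      δ z * (-Complex.I / z + Complex.I * (α : ℂ))
        + μ * (σ z * dδ z - dσ z * δ z)
        + (1 / 2) * σ z ^ 2 * (Complex.I / z ^ 2)
        - Complex.I * (β : ℂ) * σ z = 0)
    ↔ (μ = Complex.I * (4 - (κ : ℂ)) / (4 * (Real.sqrt κ : ℂ))
       ∧ δm1 = 2 * α
       ∧ (β : ℂ) * (Real.sqrt κ : ℂ) + (κ : ℂ) - 6 * Complex.I * (Real.sqrt κ : ℂ) * μ
           + (α : ℂ) * (δm1 : ℂ) - (δ0 : ℂ)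
           + Complex.I * (Real.sqrt κ : ℂ) * μ * (δ0 : ℂ) = 0
       ∧ (α : ℂ) * (δ0 : ℂ) - (δ1 : ℂ)
           - 2 * Complex.I * (Real.sqrt κ : ℂ) * μ * ((δm1 : ℂ) - (δ1 : ℂ)) = 0
       ∧ (β : ℂ) * (Real.sqrt κ : ℂ) + (κ : ℂ) / 2
           - Complex.I * (Real.sqrt κ : ℂ) * μ * (δ0 : ℂ) + (α : ℂ) * (δ1 : ℂ) = 0) := by
  set s : ℂ := (Real.sqrt κ : ℂ) with hs
  have hsqrt : (0:ℝ) < Real.sqrt κ := Real.sqrt_pos.mpr hκ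
  have hs0 : s ≠ 0 := by
    simp only [hs, ne_eq, Complex.ofReal_eq_zero]
    exact ne_of_gt hsqrt
  have hs2 : s^2 = (κ : ℂ) := by
    rw [hs, ← Complex.ofReal_pow, Real.sq_sqrt hκ.le]
  have h4s : (4:ℂ) * s ≠ 0 := by
    simp [hs0]
  constructor
  · intro h
    -- evaluate at k*I, k = 1..5
    have him : ∀ k : ℝ, 0 < k → 0 < ((k:ℂ) * I).im := by
      intro k hk; simp [Complex.mul_im, hk]
    have hne : ∀ k : ℝ, 0 < k → ((k:ℂ) * I) ≠ 0 := by
      intro k hk h0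
      have := him k hk
      rw [h0] at this; simp at this
    have ev : ∀ k : ℝ, 0 < k →
        (-2*I + 2*μ*s + I*s^2/2) + (I*(2*(α:ℂ) - δm1))*((k:ℂ)*I)
        + (I*((β:ℂ)*s + s^2 + (α:ℂ)*δm1 - δ0) + μ*s*(6-(δ0:ℂ)))*((k:ℂ)*I)^2
        + (I*((α:ℂ)*δ0-δ1) + 2*μ*s*((δm1:ℂ)-δ1))*((k:ℂ)*I)^3
        + (I*((β:ℂ)*s + s^2/2 + (α:ℂ)*δ1) + μ*s*(δ0:ℂ))*((k:ℂ)*I)^4 = 0 := by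
      intro k hk
      have H := h ((k:ℂ)*I) (him k hk)
      rw [hδ, hdδ, hσ, hdσ] at H
      exact poly_zero s α β δm1 δ0 δ1 μ ((k:ℂ)*I) (hne k hk) H
    have e1 := ev 1 one_pos
    have e2 := ev 2 two_pos
    have e3 := ev 3 (by norm_num)
    have e4 := ev 4 (by norm_num)
    have e5 := ev 5 (by norm_num)
    push_cast at e1 e2 e3 e4 e5
    refine ⟨?_, ?_, ?_, ?_, ?_⟩
    · rw [eq_div_iff h4s]
      linear_combination (10:ℂ)*e1 - 20*e2 + 20*e3 - 10*e4 + 2*e5 - I*hs2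
    · have : (δm1 : ℂ) = 2*(α:ℂ) := by
        linear_combination (-77/12 : ℂ)*e1 + (107/6)*e2 - (39/2)*e3 + (61/6)*e4
          - (25/12)*e5 + ((δm1:ℂ) - 2*(α:ℂ))*Complex.I_sq
      exact_mod_cast this
    · linear_combination (I*(71/24))*e1 + (I*(-59/6))*e2 + (I*(49/4))*e3
        + (I*(-41/6))*e4 + (I*(35/24))*e5
        + ((((β:ℂ)*s + s^2 + (α:ℂ)*δm1 - δ0)*(1 - I^2)) - I*(μ*s*(6-(δ0:ℂ))))*Complex.I_sq
        - hs2
    · linear_combination (-7/12:ℂ)*e1 + (13/6)*e2 - 3*e3 + (11/6)*e4 - (5/12)*e5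
        + ((((α:ℂ)*δ0 - δ1)*(1 - I^2)) - I*(2*μ*s*((δm1:ℂ)-δ1)))*Complex.I_sq
    · linear_combination (-I*(1/24))*e1 + (I*(1/6))*e2 + (-I*(1/4))*e3 + (I*(1/6))*e4
        + (-I*(1/24))*e5
        + ((((β:ℂ)*s + s^2/2 + (α:ℂ)*δ1)*(I^4 - I^2 + 1)) + (μ*s*(δ0:ℂ))*I*(I^2-1))*Complex.I_sq
        - (1/2)*hs2
  · rintro ⟨h1, h2, h3, h4, h5⟩
    intro z hz
    have hz0 : z ≠ 0 := by
      intro h0; rw [h0] at hz; simp at hz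
    rw [eq_div_iff h4s] at h1
    have h2' : (δm1 : ℂ) = 2*(α:ℂ) := by exact_mod_cast h2
    have key : (-2*I + 2*μ*s + I*s^2/2) + (I*(2*(α:ℂ) - δm1))*z
        + (I*((β:ℂ)*s + s^2 + (α:ℂ)*δm1 - δ0) + μ*s*(6-(δ0:ℂ)))*z^2
        + (I*((α:ℂ)*δ0-δ1) + 2*μ*s*((δm1:ℂ)-δ1))*z^3
        + (I*((β:ℂ)*s + s^2/2 + (α:ℂ)*δ1) + μ*s*(δ0:ℂ))*z^4 = 0 := by
      linear_combination (1/2)*h1 + (-I*z)*h2' + (I*z^2)*h3 + (I*z^3)*h4 + (I*z^4)*h5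
        + ((μ*s*(6-(δ0:ℂ)))*z^2 + (2*μ*s*((δm1:ℂ)-δ1))*z^3 + (μ*s*(δ0:ℂ))*z^4)*Complex.I_sq
        + (I/2 + I*z^2 + (I/2)*z^4)*hs2
    rw [hδ, hdδ, hσ, hdσ, expr_eq_poly_div s α β δm1 δ0 δ1 μ z hz0, key, zero_div]
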